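/- Let X be a normed space, C ⊆ X convex, T, U : C → C nonexpansive with common fixed point p, and define the alternating Halpern-Mann iteration y_n = (1-α_n) T x_n + α_n u, x_{n+1} = (1-β_n) U y_n + β_n y_n with (α_n), (β_n) ⊆ [0,1]. Assume: α_n → 0, Σ α_n = ∞, Σ |α_{n+1} - α_n| < ∞, and Σ |β_{n+1} - β_n| < ∞. Then lim ‖x_{n+1} - x_n‖ = 0 and lim ‖y_{n+1} - y_n‖ = 0. -/

import Mathlib

open Filter Finset

/-- Xu's quantitative lemma: if `a (n+1) ≤ (1 - t n) * a n + c n` with `t n ∈ [0,1]`,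
`∑ t = ∞` and `∑ c < ∞`, then `a → 0`. -/
lemma xu_lemma (a t c : ℕ → ℝ) (ha : ∀ n, 0 ≤ a n)
    (ht0 : ∀ n, 0 ≤ t n) (ht1 : ∀ n, t n ≤ 1)
    (hc0 : ∀ n, 0 ≤ c n) (hcs : Summable c)
    (hrec : ∀ n, a (n + 1) ≤ (1 - t n) * a n + c n)
    (htd : Tendsto (fun n => ∑ i ∈ Finset.range n, t i) atTop atTop) :
    Tendsto a atTop (nhds 0) := by
  rw [Metric.tendsto_atTop]
  intro ε hε
  have htail : Tendsto (fun N => ∑' k, c (k + N)) atTop (nhds 0) := tendsto_sum_nat_add c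
  obtain ⟨N, hN⟩ := (htail.eventually (gt_mem_nhds (half_pos hε))).exists
  -- key estimate
  have est : ∀ m, N ≤ m →
      a m ≤ (∏ k ∈ Finset.Ico N m, (1 - t k)) * a N + ∑ k ∈ Finset.Ico N m, c k := by
    intro m hm
    induction m, hm using Nat.le_induction with
    | base => simp
    | succ m hm ih =>
      have hS0 : 0 ≤ ∑ k ∈ Finset.Ico N m, c k := Finset.sum_nonneg fun k _ => hc0 k
      have hP0 : 0 ≤ ∏ k ∈ Finset.Ico N m, (1 - t k) :=
        Finset.prod_nonneg fun k _ => by linarith [ht1 k]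
      have h1 : a (m + 1) ≤ (1 - t m) * a m + c m := hrec m
      have h2 : (1 - t m) * a m ≤ (1 - t m) * ((∏ k ∈ Finset.Ico N m, (1 - t k)) * a N
          + ∑ k ∈ Finset.Ico N m, c k) :=
        mul_le_mul_of_nonneg_left ih (by linarith [ht1 m])
      rw [Finset.prod_Ico_succ_top hm, Finset.sum_Ico_succ_top hm]
      nlinarith [ht0 m, ht1 m, ha N, mul_nonneg hP0 (ha N)]
  have hsub : Summable fun k => c (k + N) := (summable_nat_add_iff N).mpr hcs
  have hsum_le : ∀ m, ∑ k ∈ Finset.Ico N m, c k ≤ ∑' k, c (k + N) := by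
    intro m
    have h : ∑ k ∈ Finset.Ico N m, c k = ∑ k ∈ Finset.range (m - N), c (k + N) := by
      rw [Finset.sum_Ico_eq_sum_range]
      exact Finset.sum_congr rfl fun k _ => by rw [add_comm]
    rw [h]
    exact Summable.sum_le_tsum _ (fun i _ => hc0 _) hsub
  -- product tends to 0
  have hSd : Tendsto (fun m => ∑ k ∈ Finset.Ico N m, t k) atTop atTop := by
    have h2 : Tendsto (fun m => (∑ k ∈ Finset.range m, t k) - ∑ k ∈ Finset.range N, t k)
        atTop atTop := tendsto_atTop_add_const_right _ _ htd
    refine h2.congr' ?_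
    filter_upwards [eventually_ge_atTop N] with m hm
    exact (Finset.sum_Ico_eq_sub t hm).symm
  have hPb : ∀ m, (∏ k ∈ Finset.Ico N m, (1 - t k)) ≤
      Real.exp (-(∑ k ∈ Finset.Ico N m, t k)) := by
    intro m
    calc (∏ k ∈ Finset.Ico N m, (1 - t k)) ≤ ∏ k ∈ Finset.Ico N m, Real.exp (-(t k)) :=
          Finset.prod_le_prod (fun k _ => by linarith [ht1 k])
            (fun k _ => by linarith [Real.add_one_le_exp (-(t k))])
      _ = Real.exp (∑ k ∈ Finset.Ico N m, -(t k)) := (Real.exp_sum _ _).symm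
      _ = Real.exp (-(∑ k ∈ Finset.Ico N m, t k)) := by rw [Finset.sum_neg_distrib]
  have hP : Tendsto (fun m => (∏ k ∈ Finset.Ico N m, (1 - t k)) * a N) atTop (nhds 0) := by
    have hE : Tendsto (fun m => Real.exp (-(∑ k ∈ Finset.Ico N m, t k)) * a N) atTop (nhds 0) := by
      have h := (Real.tendsto_exp_atBot.comp (tendsto_neg_atTop_atBot.comp hSd)).mul_const (a N)
      simpa using h
    refine squeeze_zero (fun m => mul_nonneg (Finset.prod_nonneg fun k _ => by linarith [ht1 k]) (ha N))
      (fun m => mul_le_mul_of_nonneg_right (hPb m) (ha N)) hE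
  obtain ⟨N2, hN2⟩ := Filter.eventually_atTop.mp (hP.eventually (gt_mem_nhds (half_pos hε)))
  refine ⟨max N N2, fun m hm => ?_⟩
  have hm1 : N ≤ m := le_trans (le_max_left _ _) hm
  have hm2 : N2 ≤ m := le_trans (le_max_right _ _) hm
  rw [Real.dist_eq, sub_zero, abs_of_nonneg (ha m)]
  have h1 := est m hm1
  have h2 := hsum_le m
  have h3 := hN2 m hm2
  linarith

theorem ahm_asymptotic_regularity {X : Type*} [NormedAddCommGroup X] [NormedSpace ℝ X]
    (C : Set X) (hC : Convex ℝ C) (T U : X → X)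
    (hTC : Set.MapsTo T C C) (hUC : Set.MapsTo U C C)
    (hT : ∀ a ∈ C, ∀ b ∈ C, ‖T a - T b‖ ≤ ‖a - b‖)
    (hU : ∀ a ∈ C, ∀ b ∈ C, ‖U a - U b‖ ≤ ‖a - b‖)
    (u : X) (hu : u ∈ C)
    (α β : ℕ → ℝ) (hα : ∀ n, α n ∈ Set.Icc (0:ℝ) 1) (hβ : ∀ n, β n ∈ Set.Icc (0:ℝ) 1)
    (x y : ℕ → X) (hx0 : x 0 ∈ C)
    (hy : ∀ n, y n = (1 - α n) • T (x n) + α n • u)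
    (hx : ∀ n, x (n + 1) = (1 - β n) • U (y n) + β n • y n)
    (p : X) (hp : p ∈ C) (hTp : T p = p) (hUp : U p = p)
    (hα0 : Filter.Tendsto α Filter.atTop (nhds 0))
    (hαdiv : Filter.Tendsto (fun n => ∑ i ∈ Finset.range n, α i) Filter.atTop Filter.atTop)
    (hα3 : Summable (fun n => |α (n + 1) - α n|))
    (hβ4 : Summable (fun n => |β (n + 1) - β n|)) :
    Filter.Tendsto (fun n => ‖x (n + 1) - x n‖) Filter.atTop (nhds 0) ∧
      Filter.Tendsto (fun n => ‖y (n + 1) - y n‖) Filter.atTop (nhds 0) := by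
  set M : ℝ := max ‖x 0 - p‖ ‖u - p‖ with hMdef
  have hM0 : 0 ≤ M := le_trans (norm_nonneg _) (le_max_left _ _)
  have hup : ‖u - p‖ ≤ M := le_max_right _ _
  -- boundedness
  have key : ∀ n, x n ∈ C ∧ ‖x n - p‖ ≤ M := by
    intro n
    induction n with
    | zero => exact ⟨hx0, le_max_left _ _⟩
    | succ n ih =>
      obtain ⟨hxC, hxM⟩ := ih
      obtain ⟨ha0, ha1⟩ := hα n
      obtain ⟨hb0, hb1⟩ := hβ n
      have hTxC : T (x n) ∈ C := hTC hxC
      have hyC : y n ∈ C := by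
        rw [hy]; exact hC hTxC hu (by linarith) ha0 (by ring)
      have hTxM : ‖T (x n) - p‖ ≤ M := by
        calc ‖T (x n) - p‖ = ‖T (x n) - T p‖ := by rw [hTp]
          _ ≤ ‖x n - p‖ := hT _ hxC _ hp
          _ ≤ M := hxM
      have hyM : ‖y n - p‖ ≤ M := by
        have hid : y n - p = (1 - α n) • (T (x n) - p) + α n • (u - p) := by
          rw [hy]; module
        calc ‖y n - p‖ ≤ ‖(1 - α n) • (T (x n) - p)‖ + ‖α n • (u - p)‖ := by
              rw [hid]; exact norm_add_le _ _
          _ = (1 - α n) * ‖T (x n) - p‖ + α n * ‖u - p‖ := by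
              rw [norm_smul, norm_smul, Real.norm_eq_abs, Real.norm_eq_abs,
                abs_of_nonneg (by linarith), abs_of_nonneg ha0]
          _ ≤ (1 - α n) * M + α n * M :=
              add_le_add (mul_le_mul_of_nonneg_left hTxM (by linarith))
                (mul_le_mul_of_nonneg_left hup ha0)
          _ = M := by ring
      have hUyC : U (y n) ∈ C := hUC hyC
      have hUyM : ‖U (y n) - p‖ ≤ M := by
        calc ‖U (y n) - p‖ = ‖U (y n) - U p‖ := by rw [hUp]
          _ ≤ ‖y n - p‖ := hU _ hyC _ hp
          _ ≤ M := hyM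
      refine ⟨by rw [hx]; exact hC hUyC hyC (by linarith) hb0 (by ring), ?_⟩
      have hid : x (n + 1) - p = (1 - β n) • (U (y n) - p) + β n • (y n - p) := by
        rw [hx]; module
      calc ‖x (n + 1) - p‖ ≤ ‖(1 - β n) • (U (y n) - p)‖ + ‖β n • (y n - p)‖ := by
            rw [hid]; exact norm_add_le _ _
        _ = (1 - β n) * ‖U (y n) - p‖ + β n * ‖y n - p‖ := by
            rw [norm_smul, norm_smul, Real.norm_eq_abs, Real.norm_eq_abs,
              abs_of_nonneg (by linarith), abs_of_nonneg hb0]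
        _ ≤ (1 - β n) * M + β n * M :=
            add_le_add (mul_le_mul_of_nonneg_left hUyM (by linarith))
              (mul_le_mul_of_nonneg_left hyM hb0)
        _ = M := by ring
  have hxC : ∀ n, x n ∈ C := fun n => (key n).1
  have hxM : ∀ n, ‖x n - p‖ ≤ M := fun n => (key n).2
  have hTxM : ∀ n, ‖T (x n) - p‖ ≤ M := by
    intro n
    calc ‖T (x n) - p‖ = ‖T (x n) - T p‖ := by rw [hTp]
      _ ≤ ‖x n - p‖ := hT _ (hxC n) _ hp
      _ ≤ M := hxM n
  have hyC : ∀ n, y n ∈ C := by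
    intro n
    obtain ⟨ha0, ha1⟩ := hα n
    rw [hy]; exact hC (hTC (hxC n)) hu (by linarith) ha0 (by ring)
  have hyM : ∀ n, ‖y n - p‖ ≤ M := by
    intro n
    obtain ⟨ha0, ha1⟩ := hα n
    have hid : y n - p = (1 - α n) • (T (x n) - p) + α n • (u - p) := by
      rw [hy]; module
    calc ‖y n - p‖ ≤ ‖(1 - α n) • (T (x n) - p)‖ + ‖α n • (u - p)‖ := by
          rw [hid]; exact norm_add_le _ _
      _ = (1 - α n) * ‖T (x n) - p‖ + α n * ‖u - p‖ := by
          rw [norm_smul, norm_smul, Real.norm_eq_abs, Real.norm_eq_abs,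
            abs_of_nonneg (by linarith), abs_of_nonneg ha0]
      _ ≤ (1 - α n) * M + α n * M :=
          add_le_add (mul_le_mul_of_nonneg_left (hTxM n) (by linarith))
            (mul_le_mul_of_nonneg_left hup ha0)
      _ = M := by ring
  have hTu : ∀ n, ‖T (x n) - u‖ ≤ 2 * M := by
    intro n
    calc ‖T (x n) - u‖ ≤ ‖T (x n) - p‖ + ‖p - u‖ := norm_sub_le_norm_sub_add_norm_sub _ _ _
      _ ≤ M + M := add_le_add (hTxM n) (by rw [norm_sub_rev]; exact hup)
      _ = 2 * M := by ring
  have hyU : ∀ n, ‖y n - U (y n)‖ ≤ 2 * M := by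
    intro n
    have hUyM : ‖U (y n) - p‖ ≤ M := by
      calc ‖U (y n) - p‖ = ‖U (y n) - U p‖ := by rw [hUp]
        _ ≤ ‖y n - p‖ := hU _ (hyC n) _ hp
        _ ≤ M := hyM n
    calc ‖y n - U (y n)‖ ≤ ‖y n - p‖ + ‖p - U (y n)‖ := norm_sub_le_norm_sub_add_norm_sub _ _ _
      _ ≤ M + M := add_le_add (hyM n) (by rw [norm_sub_rev]; exact hUyM)
      _ = 2 * M := by ring
  -- recurrence for y differences
  have hbn : ∀ n, ‖y (n + 1) - y n‖ ≤
      (1 - α (n + 1)) * ‖x (n + 1) - x n‖ + |α (n + 1) - α n| * (2 * M) := by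
    intro n
    obtain ⟨ha0, ha1⟩ := hα (n + 1)
    have hid : y (n + 1) - y n = (1 - α (n + 1)) • (T (x (n + 1)) - T (x n))
        + (α n - α (n + 1)) • (T (x n) - u) := by
      rw [hy (n + 1), hy n]; module
    calc ‖y (n + 1) - y n‖
        ≤ ‖(1 - α (n + 1)) • (T (x (n + 1)) - T (x n))‖
          + ‖(α n - α (n + 1)) • (T (x n) - u)‖ := by rw [hid]; exact norm_add_le _ _
      _ = (1 - α (n + 1)) * ‖T (x (n + 1)) - T (x n)‖
          + |α n - α (n + 1)| * ‖T (x n) - u‖ := by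
          rw [norm_smul, norm_smul, Real.norm_eq_abs, Real.norm_eq_abs,
            abs_of_nonneg (by linarith)]
      _ ≤ (1 - α (n + 1)) * ‖x (n + 1) - x n‖ + |α (n + 1) - α n| * (2 * M) := by
          rw [abs_sub_comm (α n)]
          exact add_le_add
            (mul_le_mul_of_nonneg_left (hT _ (hxC (n + 1)) _ (hxC n)) (by linarith))
            (mul_le_mul_of_nonneg_left (hTu n) (abs_nonneg _))
  -- recurrence for x differences
  have han : ∀ n, ‖x (n + 2) - x (n + 1)‖ ≤
      ‖y (n + 1) - y n‖ + |β (n + 1) - β n| * (2 * M) := by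
    intro n
    obtain ⟨hb0, hb1⟩ := hβ (n + 1)
    have hid : x (n + 2) - x (n + 1) = ((1 - β (n + 1)) • (U (y (n + 1)) - U (y n))
        + β (n + 1) • (y (n + 1) - y n)) + (β (n + 1) - β n) • (y n - U (y n)) := by
      rw [show n + 2 = (n + 1) + 1 from rfl, hx (n + 1), hx n]; module
    calc ‖x (n + 2) - x (n + 1)‖
        ≤ ‖(1 - β (n + 1)) • (U (y (n + 1)) - U (y n)) + β (n + 1) • (y (n + 1) - y n)‖
          + ‖(β (n + 1) - β n) • (y n - U (y n))‖ := by rw [hid]; exact norm_add_le _ _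
      _ ≤ (‖(1 - β (n + 1)) • (U (y (n + 1)) - U (y n))‖ + ‖β (n + 1) • (y (n + 1) - y n)‖)
          + |β (n + 1) - β n| * ‖y n - U (y n)‖ := by
          rw [norm_smul (β (n+1) - β n), Real.norm_eq_abs]
          exact add_le_add_left (norm_add_le _ _) _
      _ = ((1 - β (n + 1)) * ‖U (y (n + 1)) - U (y n)‖ + β (n + 1) * ‖y (n + 1) - y n‖)
          + |β (n + 1) - β n| * ‖y n - U (y n)‖ := by
          rw [norm_smul, norm_smul, Real.norm_eq_abs, Real.norm_eq_abs,
            abs_of_nonneg (by linarith), abs_of_nonneg hb0]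
      _ ≤ ((1 - β (n + 1)) * ‖y (n + 1) - y n‖ + β (n + 1) * ‖y (n + 1) - y n‖)
          + |β (n + 1) - β n| * (2 * M) := by
          exact add_le_add (add_le_add_left
            (mul_le_mul_of_nonneg_left (hU _ (hyC (n + 1)) _ (hyC n)) (by linarith)) _)
            (mul_le_mul_of_nonneg_left (hyU n) (abs_nonneg _))
      _ = ‖y (n + 1) - y n‖ + |β (n + 1) - β n| * (2 * M) := by ring
  -- apply Xu's lemma
  set a : ℕ → ℝ := fun n => ‖x (n + 1) - x n‖ with hadef
  set c : ℕ → ℝ := fun n => |α (n + 1) - α n| * (2 * M) + |β (n + 1) - β n| * (2 * M)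
    with hcdef
  have hrec : ∀ n, a (n + 1) ≤ (1 - α (n + 1)) * a n + c n := by
    intro n
    calc a (n + 1) ≤ ‖y (n + 1) - y n‖ + |β (n + 1) - β n| * (2 * M) := han n
      _ ≤ ((1 - α (n + 1)) * a n + |α (n + 1) - α n| * (2 * M))
          + |β (n + 1) - β n| * (2 * M) := add_le_add_left (hbn n) _
      _ = (1 - α (n + 1)) * a n + c n := by rw [hcdef]; ring
  have hcs : Summable c := by
    refine Summable.add ?_ ?_
    · exact hα3.mul_right _
    · exact hβ4.mul_right _
  have htd : Tendsto (fun n => ∑ i ∈ Finset.range n, α (i + 1)) atTop atTop := by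
    have h1 : ∀ n, ∑ i ∈ Finset.range n, α (i + 1)
        = (∑ i ∈ Finset.range (n + 1), α i) - α 0 := by
      intro n; rw [Finset.sum_range_succ']; ring
    have h2 : Tendsto (fun n => (∑ i ∈ Finset.range (n + 1), α i) - α 0) atTop atTop :=
      tendsto_atTop_add_const_right _ _ (hαdiv.comp (tendsto_add_atTop_nat 1))
    exact h2.congr fun n => (h1 n).symm
  have hA : Tendsto a atTop (nhds 0) := by
    refine xu_lemma a (fun n => α (n + 1)) c (fun n => norm_nonneg _)
      (fun n => (hα (n + 1)).1) (fun n => (hα (n + 1)).2) (fun n => ?_) hcs hrec htd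
    have := abs_nonneg (α (n + 1) - α n)
    have := abs_nonneg (β (n + 1) - β n)
    rw [hcdef]
    positivity
  refine ⟨hA, ?_⟩
  -- y differences
  have hdα : Tendsto (fun n => |α (n + 1) - α n| * (2 * M)) atTop (nhds 0) := by
    have h := hα3.tendsto_atTop_zero.mul_const (2 * M)
    simpa using h
  have hlim : Tendsto (fun n => a n + |α (n + 1) - α n| * (2 * M)) atTop (nhds 0) := by
    have h := hA.add hdα
    simpa using h
  refine squeeze_zero (fun n => norm_nonneg _) (fun n => ?_) hlim
  calc ‖y (n + 1) - y n‖ ≤ (1 - α (n + 1)) * a n + |α (n + 1) - α n| * (2 * M) := hbn n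
    _ ≤ a n + |α (n + 1) - α n| * (2 * M) := by
        have h1 := (hα (n + 1)).1
        have h2 : 0 ≤ a n := norm_nonneg _
        nlinarith
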